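/- Let V be a finite-dimensional complex inner product space and c > 0. Let (T_n) be a sequence of positive semidefinite self-adjoint operators on V converging (in any norm on End(V)) to an operator T, and assume every nonzero eigenvalue of each T_n is ≥ c. Then T is positive semidefinite, every nonzero eigenvalue of T is ≥ c, and rank(T_n) = rank(T) for all sufficiently large n. -/

import Mathlib

open scoped InnerProductSpace
open Filter Module LinearMap

section Aux

variable {V : Type*} [NormedAddCommGroup V] [InnerProductSpace ℂ V] [FiniteDimensional ℂ V]

/-- Spectral inequalities for a symmetric operator with spectral gap `c`. -/
lemma stmt11_gap_lemmas (c : ℝ) (hc : 0 < c) (A : V →ₗ[ℂ] V) (hA : A.IsSymmetric)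
    (hg : ∀ μ : ℂ, Module.End.HasEigenvalue A μ → μ ≠ 0 → c ≤ μ.re) :
    (∀ v : V, c * (⟪A v, v⟫_ℂ).re ≤ ‖A v‖ ^ 2) ∧
    (∀ v ∈ LinearMap.range A, c * ‖v‖ ^ 2 ≤ (⟪A v, v⟫_ℂ).re) := by
  have hn : finrank ℂ V = finrank ℂ V := rfl
  set e := hA.eigenvectorBasis hn with he
  set μ := hA.eigenvalues hn with hμ
  have hdi : ∀ i, μ i = 0 ∨ c ≤ μ i := by
    intro i
    by_cases h : μ i = 0
    · exact Or.inl h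
    · refine Or.inr ?_
      have := hg (μ i) (hA.hasEigenvalue_eigenvalues hn i)
        (by exact_mod_cast h)
      simpa using this
  have hrepr : ∀ (v : V) i, e.repr (A v) i = μ i * e.repr v i := fun v i =>
    hA.eigenvectorBasis_apply_self_apply hn v i
  have hnormsq : ∀ (x : EuclideanSpace ℂ (Fin (finrank ℂ V))), ‖x‖ ^ 2 = ∑ i, ‖x i‖ ^ 2 := by
    intro x
    rw [EuclideanSpace.norm_eq, Real.sq_sqrt (by positivity)]
  have hinner : ∀ v : V, (⟪A v, v⟫_ℂ).re = ∑ i, μ i * ‖e.repr v i‖ ^ 2 := by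
    intro v
    have h1 : ⟪A v, v⟫_ℂ = ⟪e.repr (A v), e.repr v⟫_ℂ := (e.repr.inner_map_map (A v) v).symm
    rw [h1, PiLp.inner_apply, Complex.re_sum]
    refine Finset.sum_congr rfl fun i _ => ?_
    rw [hrepr]
    simp only [RCLike.inner_apply, map_mul, Complex.conj_ofReal]
    rw [mul_left_comm, Complex.re_ofReal_mul, Complex.mul_conj,
      Complex.ofReal_re, Complex.normSq_eq_norm_sq]
  have hAnorm : ∀ v : V, ‖A v‖ ^ 2 = ∑ i, (μ i) ^ 2 * ‖e.repr v i‖ ^ 2 := by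
    intro v
    rw [← e.repr.norm_map (A v), hnormsq]
    refine Finset.sum_congr rfl fun i _ => ?_
    rw [hrepr]
    rw [norm_mul, mul_pow, Complex.norm_real, Real.norm_eq_abs, sq_abs]
  have hvnorm : ∀ v : V, ‖v‖ ^ 2 = ∑ i, ‖e.repr v i‖ ^ 2 := by
    intro v; rw [← e.repr.norm_map v, hnormsq]
  constructor
  · intro v
    rw [hinner, hAnorm, Finset.mul_sum]
    refine Finset.sum_le_sum fun i _ => ?_
    rcases hdi i with h | h
    · simp [h]
    · have hs : (0:ℝ) ≤ ‖e.repr v i‖ ^ 2 := sq_nonneg _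
      have h0 : (0:ℝ) ≤ μ i * ‖e.repr v i‖ ^ 2 := mul_nonneg (hc.le.trans h) hs
      calc c * (μ i * ‖e.repr v i‖ ^ 2) ≤ μ i * (μ i * ‖e.repr v i‖ ^ 2) :=
            mul_le_mul_of_nonneg_right h h0
        _ = μ i ^ 2 * ‖e.repr v i‖ ^ 2 := by ring
  · rintro v ⟨w, rfl⟩
    have hz : ∀ i, μ i = 0 → e.repr (A w) i = 0 := by
      intro i h; rw [hrepr, h]; simp
    rw [hinner, hvnorm, Finset.mul_sum]
    refine Finset.sum_le_sum fun i _ => ?_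
    rcases hdi i with h | h
    · simp [hz i h]
    · exact mul_le_mul_of_nonneg_right h (sq_nonneg _)

end Aux

/-- A convergent sequence of positive semidefinite self-adjoint operators on a
finite-dimensional complex inner product space whose nonzero eigenvalues are all `≥ c > 0`
has a positive semidefinite limit with the same spectral gap, and the ranks eventually
equal the rank of the limit. -/
theorem stmt11 {V : Type*} [NormedAddCommGroup V] [InnerProductSpace ℂ V]
    [FiniteDimensional ℂ V]
    (c : ℝ) (hc : 0 < c) (T : ℕ → (V →ₗ[ℂ] V)) (Tlim : V →ₗ[ℂ] V)
    (hsym : ∀ n, (T n).IsSymmetric)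
    (hpos : ∀ n (v : V), 0 ≤ (⟪(T n) v, v⟫_ℂ).re)
    (hgap : ∀ n (μ : ℂ), Module.End.HasEigenvalue (T n) μ → μ ≠ 0 → c ≤ μ.re)
    (hconv : ∀ v : V, Filter.Tendsto (fun n => T n v) Filter.atTop (nhds (Tlim v))) :
    Tlim.IsSymmetric ∧ (∀ v : V, 0 ≤ (⟪Tlim v, v⟫_ℂ).re) ∧
    (∀ μ : ℂ, Module.End.HasEigenvalue Tlim μ → μ ≠ 0 → c ≤ μ.re) ∧
    (∀ᶠ n in Filter.atTop,
      Module.finrank ℂ ↥(LinearMap.range (T n)) =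
        Module.finrank ℂ ↥(LinearMap.range Tlim)) := by
  -- symmetry of the limit
  have hsymlim : Tlim.IsSymmetric := by
    intro x y
    have h1 : Filter.Tendsto (fun n => ⟪T n x, y⟫_ℂ) Filter.atTop (nhds ⟪Tlim x, y⟫_ℂ) :=
      (hconv x).inner tendsto_const_nhds
    have h2 : Filter.Tendsto (fun n => ⟪T n x, y⟫_ℂ) Filter.atTop (nhds ⟪x, Tlim y⟫_ℂ) := by
      have : (fun n => ⟪T n x, y⟫_ℂ) = fun n => ⟪x, T n y⟫_ℂ := funext fun n => hsym n x y
      rw [this]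
      exact tendsto_const_nhds.inner (hconv y)
    exact tendsto_nhds_unique h1 h2
  -- positivity of the limit
  have hposlim : ∀ v : V, 0 ≤ (⟪Tlim v, v⟫_ℂ).re := by
    intro v
    have h1 : Filter.Tendsto (fun n => (⟪T n v, v⟫_ℂ).re) Filter.atTop
        (nhds (⟪Tlim v, v⟫_ℂ).re) :=
      (Complex.continuous_re.tendsto _).comp ((hconv v).inner tendsto_const_nhds)
    exact ge_of_tendsto' h1 fun n => hpos n v
  -- spectral gap of the limit
  have hgaplim : ∀ μ : ℂ, Module.End.HasEigenvalue Tlim μ → μ ≠ 0 → c ≤ μ.re := by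
    intro μ hμ hμ0
    obtain ⟨v, hv⟩ := hμ.exists_hasEigenvector
    have hveq : Tlim v = μ • v := hv.apply_eq_smul
    have hconj : (starRingEnd ℂ) μ = μ := hsymlim.conj_eigenvalue_eq_self hμ
    have hμre : (μ.re : ℂ) = μ := Complex.conj_eq_iff_re.mp hconj
    set r := μ.re with hr
    have hr0 : r ≠ 0 := fun h => hμ0 (by rw [← hμre, h, Complex.ofReal_zero])
    have hvn : 0 < ‖v‖ := norm_pos_iff.mpr hv.2
    -- pass the quadratic inequality to the limit
    have hquad : ∀ n, c * (⟪T n v, v⟫_ℂ).re ≤ ‖T n v‖ ^ 2 := fun n =>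
      (stmt11_gap_lemmas c hc (T n) (hsym n) (hgap n)).1 v
    have hL : Filter.Tendsto (fun n => c * (⟪T n v, v⟫_ℂ).re) Filter.atTop
        (nhds (c * (⟪Tlim v, v⟫_ℂ).re)) :=
      (((Complex.continuous_re.tendsto _).comp ((hconv v).inner tendsto_const_nhds))).const_mul c
    have hR : Filter.Tendsto (fun n => ‖T n v‖ ^ 2) Filter.atTop (nhds (‖Tlim v‖ ^ 2)) :=
      ((hconv v).norm).pow 2
    have hlim : c * (⟪Tlim v, v⟫_ℂ).re ≤ ‖Tlim v‖ ^ 2 :=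
      le_of_tendsto_of_tendsto' hL hR hquad
    have hip : (⟪Tlim v, v⟫_ℂ).re = r * ‖v‖ ^ 2 := by
      rw [hveq, inner_smul_left, hconj, ← hμre, inner_self_eq_norm_sq_to_K,
        Complex.re_ofReal_mul]
      norm_cast
    have hnrm : ‖Tlim v‖ ^ 2 = r ^ 2 * ‖v‖ ^ 2 := by
      rw [hveq, norm_smul, ← hμre, Complex.norm_real, Real.norm_eq_abs, mul_pow, sq_abs]
    have hsq : 0 < ‖v‖ ^ 2 := by positivity
    have hrpos : 0 < r := by
      have h1 := hposlim v
      rw [hip] at h1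
      have h2 : 0 ≤ r := by nlinarith
      exact lt_of_le_of_ne h2 (Ne.symm hr0)
    rw [hip, hnrm] at hlim
    nlinarith [mul_pos hrpos hsq]
  refine ⟨hsymlim, hposlim, hgaplim, ?_⟩
  -- operator-norm convergence
  set b := Module.finBasis ℂ V with hb
  set Ψ : (Fin (finrank ℂ V) → V) →ₗ[ℂ] (V →L[ℂ] V) :=
    (LinearMap.toContinuousLinearMap.toLinearMap.comp (b.constr ℂ).toLinearMap) with hΨ
  have hΨc : Continuous Ψ := Ψ.continuous_of_finiteDimensional
  have hΨT : ∀ S : V →ₗ[ℂ] V, Ψ (fun i => S (b i)) = LinearMap.toContinuousLinearMap S := by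
    intro S
    have : b.constr ℂ (fun i => S (b i)) = S := b.ext fun i => b.constr_basis ℂ _ i
    simp [hΨ, this]
  have htend : Filter.Tendsto (fun n => LinearMap.toContinuousLinearMap (T n)) Filter.atTop
      (nhds (LinearMap.toContinuousLinearMap Tlim)) := by
    have h1 : Filter.Tendsto (fun n => fun i => T n (b i)) Filter.atTop
        (nhds (fun i => Tlim (b i))) :=
      tendsto_pi_nhds.mpr fun i => hconv (b i)
    have h2 := (hΨc.tendsto _).comp h1
    rw [show (⇑Ψ ∘ fun n => fun i => T n (b i)) = fun n => LinearMap.toContinuousLinearMap (T n)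
        from funext fun n => hΨT (T n), hΨT Tlim] at h2
    exact h2
  have hnorm0 : Filter.Tendsto
      (fun n => ‖LinearMap.toContinuousLinearMap (T n) - LinearMap.toContinuousLinearMap Tlim‖)
      Filter.atTop (nhds 0) :=
    tendsto_iff_norm_sub_tendsto_zero.mp htend
  -- the key rank comparison lemma
  have key : ∀ (A B : V →ₗ[ℂ] V), A.IsSymmetric →
      (∀ μ : ℂ, Module.End.HasEigenvalue A μ → μ ≠ 0 → c ≤ μ.re) →
      finrank ℂ ↥(LinearMap.range B) < finrank ℂ ↥(LinearMap.range A) →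
      c ≤ ‖LinearMap.toContinuousLinearMap A - LinearMap.toContinuousLinearMap B‖ := by
    intro A B hAs hAg hlt
    have hrk := B.finrank_range_add_finrank_ker
    have hdim : finrank ℂ V < finrank ℂ ↥(LinearMap.range A) + finrank ℂ ↥(LinearMap.ker B) := by
      omega
    have hsum := Submodule.finrank_sup_add_finrank_inf_eq (LinearMap.range A) (LinearMap.ker B)
    have hle := Submodule.finrank_le (LinearMap.range A ⊔ LinearMap.ker B)
    have hpos' : 0 < finrank ℂ ↥(LinearMap.range A ⊓ LinearMap.ker B) := by omega
    have hne : (LinearMap.range A ⊓ LinearMap.ker B) ≠ ⊥ := by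
      intro h
      rw [h] at hpos'
      simp at hpos'
    obtain ⟨v, hvmem, hv0⟩ := Submodule.exists_mem_ne_zero_of_ne_bot hne
    obtain ⟨hvA, hvB⟩ := Submodule.mem_inf.mp hvmem
    set u : V := ((‖v‖ : ℂ))⁻¹ • v with hu'
    have hu : ‖u‖ = 1 := norm_smul_inv_norm (𝕜 := ℂ) hv0
    have huA : u ∈ LinearMap.range A := Submodule.smul_mem _ _ hvA
    have huB : B u = 0 := LinearMap.mem_ker.mp (Submodule.smul_mem _ _ hvB)
    set D := LinearMap.toContinuousLinearMap A - LinearMap.toContinuousLinearMap B with hD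
    have hDu : D u = A u := by
      simp [hD, huB]
    calc c = c * ‖u‖ ^ 2 := by rw [hu]; ring
      _ ≤ (⟪A u, u⟫_ℂ).re := (stmt11_gap_lemmas c hc A hAs hAg).2 u huA
      _ ≤ ‖⟪A u, u⟫_ℂ‖ := Complex.re_le_norm _
      _ ≤ ‖A u‖ * ‖u‖ := norm_inner_le_norm _ _
      _ = ‖D u‖ * ‖u‖ := by rw [hDu]
      _ ≤ ‖D‖ * ‖u‖ * ‖u‖ := mul_le_mul_of_nonneg_right (D.le_opNorm u) (norm_nonneg u)
      _ = ‖D‖ := by rw [hu]; ring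
  -- conclude
  have hev : ∀ᶠ n in Filter.atTop,
      ‖LinearMap.toContinuousLinearMap (T n) - LinearMap.toContinuousLinearMap Tlim‖ < c :=
    hnorm0.eventually_lt_const hc
  filter_upwards [hev] with n hn
  rcases lt_trichotomy (finrank ℂ ↥(LinearMap.range (T n))) (finrank ℂ ↥(LinearMap.range Tlim))
    with h | h | h
  · exfalso
    have := key Tlim (T n) hsymlim hgaplim h
    rw [norm_sub_rev] at this
    exact absurd hn (not_lt.mpr this)
  · exact h
  · exfalso
    have := key (T n) Tlim (hsym n) (hgap n) h
    exact absurd hn (not_lt.mpr this)
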